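/- Let r ≥ 1. If cms_r(λK_{n_1,…,n_k}) = r·n_1, then n_1^{u−1} divides r_2. -/

import Mathlib

set_option maxRecDepth 8000


/-- A hypergraph: a finite vertex type, a finite edge (label) type and an incidence
relation; distinct (parallel) edges may be incident with the same vertices. -/
structure Hypergraph' where
  V : Type
  E : Type
  fintV : Fintype V
  fintE : Fintype E
  inc : E → V → Bool

namespace Hypergraph'

/-- The number ε of edges of `H`. -/
def edgeCard (H : Hypergraph') : ℕ :=
  letI := H.fintE
  Fintype.card H.E

/-- The degree of a vertex: the number of edges incident with it. -/
def degree (H : Hypergraph') (v : H.V) : ℕ :=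
  letI := H.fintE
  (Finset.univ.filter (fun e => H.inc e v = true)).card

/-- The maximum degree Δ(H). -/
def maxDegree (H : Hypergraph') : ℕ :=
  letI := H.fintV
  Finset.univ.sup H.degree

/-- An ordering (labelling) of `H`, encoded by its ε-periodic enumeration:
`f i` is the edge whose label is `i % ε`; on `[ε]`, `f` is a bijection onto the
edge set. -/
structure IsOrdering (H : Hypergraph') (f : ℕ → H.E) : Prop where
  periodic : ∀ i, f (i + H.edgeCard) = f i
  inj : ∀ i j, i < H.edgeCard → j < H.edgeCard → f i = f j → i = j
  surj : ∀ e : H.E, ∃ i, i < H.edgeCard ∧ f i = e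

/-- The degree of `v` in the hypergraph `H(S)` formed (with multiplicity) by the
sequence `S` of `s` (cyclically) consecutive edges with labels `j, …, j+s-1`
taken modulo ε. -/
def windowDeg (H : Hypergraph') (f : ℕ → H.E) (j s : ℕ) (v : H.V) : ℕ :=
  ((Finset.range s).filter (fun i => H.inc (f (j + i)) v = true)).card

/-- Every sequence of `s` consecutive edges of the ordering `f` forms a hypergraph of
maximum degree at most `r`.  A window of `s` consecutive edges starts at a label `j`
with `j + s ≤ (a+1)·ε`, where `a·ε ≤ s < (a+1)·ε` (i.e. `a = s / ε`). -/
def msOK (H : Hypergraph') (f : ℕ → H.E) (r s : ℕ) : Prop :=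
  ∀ j v, j + s ≤ (s / H.edgeCard + 1) * H.edgeCard → H.windowDeg f j s v ≤ r

/-- Every sequence of `s` cyclically consecutive edges of the ordering `f` forms a
hypergraph of maximum degree at most `r`. -/
def cmsOK (H : Hypergraph') (f : ℕ → H.E) (r s : ℕ) : Prop :=
  ∀ j v, H.windowDeg f j s v ≤ r

/-- ms_r(ℓ): the largest `s` such that every `s` consecutive edges of `ℓ` form a
hypergraph of maximum degree at most `r`. -/
noncomputable def msrOf (H : Hypergraph') (f : ℕ → H.E) (r : ℕ) : ℕ :=
  sSup {s | H.msOK f r s}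

/-- cms_r(ℓ). -/
noncomputable def cmsrOf (H : Hypergraph') (f : ℕ → H.E) (r : ℕ) : ℕ :=
  sSup {s | H.cmsOK f r s}

/-- ms_r(H): the maximum of ms_r(ℓ) over all orderings ℓ of H. -/
noncomputable def msr (H : Hypergraph') (r : ℕ) : ℕ :=
  sSup {s | ∃ f, H.IsOrdering f ∧ H.msOK f r s}

/-- cms_r(H): the maximum of cms_r(ℓ) over all orderings ℓ of H. -/
noncomputable def cmsr (H : Hypergraph') (r : ℕ) : ℕ :=
  sSup {s | ∃ f, H.IsOrdering f ∧ H.cmsOK f r s}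

end Hypergraph'

/-- The complete multi-k-partite k-graph λ·K_{n 0, …, n (k-1)} with edge
multiplicity `lam`: the vertex set is the disjoint union of the parts
`N_i = Fin (n i)`, and for each choice of one vertex from each part there are
`lam` parallel edges incident with exactly those `k` vertices. -/
def lamK (k lam : ℕ) (n : Fin k → ℕ) : Hypergraph' where
  V := Σ i : Fin k, Fin (n i)
  E := Fin lam × (∀ i : Fin k, Fin (n i))
  fintV := inferInstance
  fintE := inferInstance
  inc := fun e v => decide (e.2 v.1 = v.2)


section Aux

private lemma period_mul' {α : Type*} (F : ℕ → α) (g : ℕ) (hg : ∀ j, F (j + g) = F j) :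
    ∀ m j, F (j + m * g) = F j := by
  intro m
  induction m with
  | zero => simp
  | succ m ih =>
    intro j
    have h : j + (m + 1) * g = (j + m * g) + g := by ring
    rw [h, hg, ih]

private lemma period_gcd' {α : Type*} (F : ℕ → α) (p q : ℕ)
    (hp : ∀ j, F (j + p) = F j) (hq : ∀ j, F (j + q) = F j) :
    ∀ j, F (j + Nat.gcd p q) = F j := by
  induction p, q using Nat.gcd.induction with
  | H0 q => simpa using hq
  | H1 p q hppos ih =>
    rw [Nat.gcd_rec]
    apply ih
    · intro j
      have h1 : F (j + q % p + p * (q / p)) = F (j + q % p) := by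
        have h := period_mul' F p hp (q / p) (j + q % p)
        rw [mul_comm] at h; exact h
      have h2 : j + q % p + p * (q / p) = j + q := by
        rw [add_assoc, Nat.mod_add_div]
      rw [h2] at h1
      rw [← h1, hq]
    · exact hp

private lemma count_blocks' {α : Type*} [DecidableEq α] (F : ℕ → α) (a : α) (g : ℕ)
    (hg : ∀ j, F (j + g) = F j) (m : ℕ) :
    ((Finset.range (m * g)).filter (fun i => F i = a)).card
      = m * ((Finset.range g).filter (fun i => F i = a)).card := by
  induction m with
  | zero => simp
  | succ m ih =>
    have hsplit : (m + 1) * g = m * g + g := by ring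
    rw [hsplit]
    rw [Finset.card_filter, Finset.sum_range_add, ← Finset.card_filter, ← Finset.card_filter, ih]
    have h : ∀ i, F (m * g + i) = F i := by
      intro i
      have h := period_mul' F g hg m i
      rw [add_comm] at h; exact h
    simp only [h]
    ring

private lemma ordering_exists' (H : Hypergraph') (h : 0 < H.edgeCard) :
    ∃ f, H.IsOrdering f := by
  letI := H.fintE
  let eqv : Fin H.edgeCard ≃ H.E := (Fintype.equivFin H.E).symm
  refine ⟨fun i => eqv ⟨i % H.edgeCard, Nat.mod_lt _ h⟩, ?_, ?_, ?_⟩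
  · intro i; simp [Nat.add_mod_right]
  · intro i j hi hj hij
    simpa [Nat.mod_eq_of_lt hi, Nat.mod_eq_of_lt hj] using congrArg Fin.val (eqv.injective hij)
  · intro e
    refine ⟨(eqv.symm e).val, (eqv.symm e).isLt, ?_⟩
    simp [Nat.mod_eq_of_lt (eqv.symm e).isLt]

private lemma window_sum' (k lam : ℕ) (n : Fin k → ℕ) (f : ℕ → (lamK k lam n).E)
    (j s : ℕ) (t : Fin k) :
    ∑ a : Fin (n t), (lamK k lam n).windowDeg f j s ⟨t, a⟩ = s := by
  have h := Finset.card_eq_sum_card_fiberwise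
    (s := Finset.range s) (t := (Finset.univ : Finset (Fin (n t))))
    (f := fun i => (f (j + i)).2 t) (fun x _ => Finset.mem_univ _)
  rw [Finset.card_range] at h
  have h2 : ∀ a : Fin (n t), (lamK k lam n).windowDeg f j s ⟨t, a⟩
      = ((Finset.range s).filter (fun i => (f (j + i)).2 t = a)).card := by
    intro a; simp [Hypergraph'.windowDeg, lamK]
  simp only [h2]
  exact h.symm

private lemma edge_count' (k u lam : ℕ) (n : Fin k → ℕ) (hpos : ∀ i, 1 ≤ n i)
    [DecidablePred (fun e : Fin lam × (∀ i : Fin k, Fin (n i)) =>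
        ∀ t : Fin k, (t : ℕ) < u → e.2 t = ⟨0, hpos t⟩)] :
    ((Finset.univ : Finset (Fin lam × (∀ i : Fin k, Fin (n i)))).filter
        (fun e => ∀ t : Fin k, (t : ℕ) < u → e.2 t = ⟨0, hpos t⟩)).card
      = lam * ∏ i ∈ Finset.univ.filter (fun i : Fin k => u ≤ (i : ℕ)), n i := by
  classical
  rw [← Fintype.card_subtype]
  have e1 : {e : Fin lam × (∀ i : Fin k, Fin (n i)) //
        ∀ t : Fin k, (t : ℕ) < u → e.2 t = ⟨0, hpos t⟩}
      ≃ Fin lam × (∀ i : Fin k, {x : Fin (n i) // (i : ℕ) < u → x = ⟨0, hpos i⟩}) :=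
    { toFun := fun e => (e.1.1, fun i => ⟨e.1.2 i, fun h => e.2 i h⟩)
      invFun := fun p => ⟨(p.1, fun i => (p.2 i).1), fun t ht => (p.2 t).2 ht⟩
      left_inv := fun e => rfl
      right_inv := fun p => rfl }
  rw [Fintype.card_congr e1, Fintype.card_prod, Fintype.card_fin, Fintype.card_pi]
  congr 1
  have h2 : ∀ i : Fin k, Fintype.card {x : Fin (n i) // (i : ℕ) < u → x = ⟨0, hpos i⟩}
      = if (i : ℕ) < u then 1 else n i := by
    intro i
    by_cases h : (i : ℕ) < u
    · rw [if_pos h, Fintype.card_eq_one_iff]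
      exact ⟨⟨⟨0, hpos i⟩, fun _ => rfl⟩, fun y => Subtype.ext (y.2 h)⟩
    · rw [if_neg h, Fintype.card_congr (Equiv.subtypeUnivEquiv (fun x hx => absurd hx h))]
      exact Fintype.card_fin _
  simp only [h2]
  rw [Finset.prod_ite, Finset.prod_const_one, one_mul]
  apply Finset.prod_congr
  · ext i; simp [not_lt]
  · intros; rfl

private lemma card_lt_filter' (k u : ℕ) (huk : u ≤ k) :
    ((Finset.univ : Finset (Fin k)).filter (fun i : Fin k => (i : ℕ) < u)).card = u := by
  have h := Finset.card_bij
    (s := (Finset.univ : Finset (Fin k)).filter (fun i : Fin k => (i : ℕ) < u))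
    (t := Finset.range u) (fun (i : Fin k) _ => (i : ℕ)) ?_ ?_ ?_
  · rw [h, Finset.card_range]
  · intro a ha; simp only [Finset.mem_filter] at ha; exact Finset.mem_range.mpr ha.2
  · intro a _ b _ h; exact Fin.val_injective h
  · intro b hb
    have hbu := Finset.mem_range.mp hb
    exact ⟨⟨b, lt_of_lt_of_le hbu huk⟩, by simp [hbu], rfl⟩

private lemma gcd_shift' (r r1 r2 m : ℕ) (h : r = r1 * m + r2) (h2 : r2 < m) :
    Nat.gcd r m = Nat.gcd r2 m := by
  rw [Nat.gcd_comm r m, Nat.gcd_comm r2 m]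
  conv_lhs => rw [Nat.gcd_rec]
  conv_rhs => rw [Nat.gcd_rec]
  congr 1
  rw [h, add_comm, Nat.add_mul_mod_self_right, Nat.mod_eq_of_lt h2]

end Aux

/-- Lemma (necessary condition, cyclic): if `cms_r(λK_{n_1,…,n_k}) = r·n_1`
then `n_1^(u-1) ∣ r_2`. -/
theorem cms_eq_necessary
    (k lam u : ℕ) (n : Fin k → ℕ)
    (hk : 2 ≤ k) (hlam : 1 ≤ lam)
    (hu1 : 1 ≤ u) (huk : u ≤ k)
    (hpos : ∀ i, 1 ≤ n i)
    (hmono : ∀ i j : Fin k, i ≤ j → n i ≤ n j)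
    (heq : ∀ i : Fin k, (i : ℕ) < u → n i = n ⟨0, by omega⟩)
    (hlt : ∀ i : Fin k, u ≤ (i : ℕ) → n ⟨0, by omega⟩ < n i)
    (N N' : ℕ)
    (hN : N = ∏ i ∈ Finset.univ.filter (fun i : Fin k => (i : ℕ) ≠ 0), n i)
    (hN' : N' = ∏ i ∈ Finset.univ.filter (fun i : Fin k => u ≤ (i : ℕ)), n i)
    (r r1 r2 : ℕ) (hr : 1 ≤ r)
    (hrdec : r = r1 * (lam * N) + r2) (hr2 : r2 < lam * N)
    (hcms : (lamK k lam n).cmsr r = r * n ⟨0, by omega⟩) :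
    (n ⟨0, by omega⟩) ^ (u - 1) ∣ r2 := by
  classical
  have hk0 : (0:ℕ) < k := by omega
  have hεval : (lamK k lam n).edgeCard = lam * ∏ i, n i := by
    simp [Hypergraph'.edgeCard, lamK]
    exact Fintype.card_eq_nat_card.trans (by simp [Nat.card_prod, Nat.card_pi])
  have hprodpos : 0 < ∏ i, n i := Finset.prod_pos (fun i _ => hpos i)
  have hεpos : 0 < (lamK k lam n).edgeCard := by
    rw [hεval]; exact Nat.mul_pos hlam hprodpos
  have hub : ∀ s ∈ {s | ∃ f, (lamK k lam n).IsOrdering f ∧ (lamK k lam n).cmsOK f r s},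
      s ≤ r * n ⟨0, hk0⟩ := by
    rintro s ⟨f, hford, hcm⟩
    calc s = ∑ a : Fin (n ⟨0, hk0⟩), (lamK k lam n).windowDeg f 0 s ⟨⟨0, hk0⟩, a⟩ :=
          (window_sum' k lam n f 0 s ⟨0, hk0⟩).symm
      _ ≤ ∑ _a : Fin (n ⟨0, hk0⟩), r := Finset.sum_le_sum (fun a _ => hcm 0 _)
      _ = r * n ⟨0, hk0⟩ := by simp [Finset.sum_const, mul_comm]
  have hne : {s | ∃ f, (lamK k lam n).IsOrdering f ∧ (lamK k lam n).cmsOK f r s}.Nonempty := by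
    obtain ⟨f, hford⟩ := ordering_exists' _ hεpos
    exact ⟨0, f, hford, fun j v => by simp [Hypergraph'.windowDeg]⟩
  have hbdd : BddAbove {s | ∃ f, (lamK k lam n).IsOrdering f ∧ (lamK k lam n).cmsOK f r s} :=
    ⟨r * n ⟨0, hk0⟩, hub⟩
  have hmem := Nat.sSup_mem hne hbdd
  have hc : sSup {s | ∃ f, (lamK k lam n).IsOrdering f ∧ (lamK k lam n).cmsOK f r s}
      = r * n ⟨0, hk0⟩ := hcms
  rw [hc] at hmem
  obtain ⟨f, hford, hfc⟩ := hmem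
  -- exactness of every window of length r * n_1 on parts t < u
  have hexact : ∀ j (t : Fin k), (t : ℕ) < u → ∀ a : Fin (n t),
      (lamK k lam n).windowDeg f j (r * n ⟨0, hk0⟩) ⟨t, a⟩ = r := by
    intro j t ht
    have hle : ∀ a ∈ (Finset.univ : Finset (Fin (n t))),
        (lamK k lam n).windowDeg f j (r * n ⟨0, hk0⟩) ⟨t, a⟩ ≤ r := fun a _ => hfc j ⟨t, a⟩
    have hsr : ∑ a : Fin (n t), (lamK k lam n).windowDeg f j (r * n ⟨0, hk0⟩) ⟨t, a⟩
        = ∑ _a : Fin (n t), r := by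
      rw [window_sum' k lam n f j (r * n ⟨0, hk0⟩) t, Finset.sum_const, Finset.card_univ,
        Fintype.card_fin, heq t ht, smul_eq_mul, mul_comm]
    intro a
    exact (Finset.sum_eq_sum_iff_of_le hle).mp hsr a (Finset.mem_univ a)
  -- shift invariance of coordinates t < u
  have hshift : ∀ j (t : Fin k), (t : ℕ) < u →
      (f (j + r * n ⟨0, hk0⟩)).2 t = (f j).2 t := by
    intro j t ht
    have hwd : ∀ j' s', (lamK k lam n).windowDeg f j' s' ⟨t, (f j).2 t⟩
        = ∑ i ∈ Finset.range s',
            (if (lamK k lam n).inc (f (j' + i)) ⟨t, (f j).2 t⟩ = true then 1 else 0) :=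
      fun j' s' => Finset.card_filter _ _
    have h1 : (lamK k lam n).windowDeg f j (r * n ⟨0, hk0⟩ + 1) ⟨t, (f j).2 t⟩
        = r + (if (lamK k lam n).inc (f (j + r * n ⟨0, hk0⟩)) ⟨t, (f j).2 t⟩ = true
            then 1 else 0) := by
      rw [hwd, Finset.sum_range_succ, ← hwd, hexact j t ht ((f j).2 t)]
    have h2 : (lamK k lam n).windowDeg f j (r * n ⟨0, hk0⟩ + 1) ⟨t, (f j).2 t⟩
        = r + (if (lamK k lam n).inc (f j) ⟨t, (f j).2 t⟩ = true then 1 else 0) := by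
      rw [hwd, Finset.sum_range_succ']
      have hstep : ∀ i ∈ Finset.range (r * n ⟨0, hk0⟩),
          (if (lamK k lam n).inc (f (j + (i + 1))) ⟨t, (f j).2 t⟩ = true then 1 else 0)
          = (if (lamK k lam n).inc (f ((j + 1) + i)) ⟨t, (f j).2 t⟩ = true then 1 else 0) := by
        intro i _
        have harg : j + (i + 1) = (j + 1) + i := by omega
        rw [harg]
      rw [Finset.sum_congr rfl hstep, ← hwd, hexact (j + 1) t ht ((f j).2 t)]
      simp only [Nat.add_zero]
    have hB : (lamK k lam n).inc (f j) ⟨t, (f j).2 t⟩ = true := by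
      simp [lamK]
    rw [hB] at h2
    have hA : (lamK k lam n).inc (f (j + r * n ⟨0, hk0⟩)) ⟨t, (f j).2 t⟩ = true := by
      by_contra hA
      rw [h2] at h1
      simp [hA] at h1
    simpa [lamK] using hA
  -- the tuple function and its periods
  set T : ℕ → (∀ i : Fin k, Fin (n i)) :=
    fun j i => if (i : ℕ) < u then (f j).2 i else ⟨0, hpos i⟩ with hTdef
  have hT1 : ∀ j, T (j + r * n ⟨0, hk0⟩) = T j := by
    intro j; funext i; simp only [hTdef]
    split
    · rw [hshift j i ‹_›]
    · rfl
  have hT2 : ∀ j, T (j + (lamK k lam n).edgeCard) = T j := by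
    intro j; funext i; simp only [hTdef, hford.periodic j]
  have hTg : ∀ j, T (j + Nat.gcd (r * n ⟨0, hk0⟩) ((lamK k lam n).edgeCard)) = T j :=
    period_gcd' T _ _ hT1 hT2
  set g := Nat.gcd (r * n ⟨0, hk0⟩) ((lamK k lam n).edgeCard) with hgdef
  set a0 : ∀ i : Fin k, Fin (n i) := fun i => ⟨0, hpos i⟩ with ha0def
  set c := ((Finset.range g).filter (fun i => T i = a0)).card with hcdef
  have hgdvd : g ∣ (lamK k lam n).edgeCard := Nat.gcd_dvd_right _ _
  have hm : (lamK k lam n).edgeCard / g * g = (lamK k lam n).edgeCard :=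
    Nat.div_mul_cancel hgdvd
  have hcount1 : ((Finset.range ((lamK k lam n).edgeCard)).filter (fun i => T i = a0)).card
      = ((lamK k lam n).edgeCard / g) * c := by
    conv_lhs => rw [← hm]
    exact count_blocks' T a0 g hTg _
  have hQ : ∀ i, (T i = a0) ↔ (∀ t : Fin k, (t : ℕ) < u → (f i).2 t = ⟨0, hpos t⟩) := by
    intro i
    constructor
    · intro h t ht
      have h' := congrFun h t
      simpa [hTdef, ha0def, ht] using h'
    · intro h; funext t
      simp only [hTdef, ha0def]
      split
      · exact h t ‹_›
      · rfl
  have hcount2 : ((Finset.range ((lamK k lam n).edgeCard)).filter (fun i => T i = a0)).card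
      = lam * N' := by
    letI := (lamK k lam n).fintE
    have hbij : ((Finset.range ((lamK k lam n).edgeCard)).filter (fun i => T i = a0)).card
        = ((Finset.univ : Finset (Fin lam × (∀ i : Fin k, Fin (n i)))).filter
            (fun e => ∀ t : Fin k, (t : ℕ) < u → e.2 t = ⟨0, hpos t⟩)).card := by
      apply Finset.card_bij (fun i _ => f i)
      · intro i hi
        simp only [Finset.mem_filter, Finset.mem_range] at hi
        refine Finset.mem_filter.mpr ?_
        exact ⟨Finset.mem_univ _, (hQ i).mp hi.2⟩
      · intro i hi j hj hij
        simp only [Finset.mem_filter, Finset.mem_range] at hi hj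
        exact hford.inj i j hi.1 hj.1 hij
      · intro e he
        obtain ⟨i, hi, hfi⟩ := hford.surj e
        refine ⟨i, ?_, hfi⟩
        simp only [Finset.mem_filter, Finset.mem_range]
        refine ⟨hi, (hQ i).mpr ?_⟩
        rw [hfi]
        exact (Finset.mem_filter.mp he).2
    rw [hbij, hN']
    exact edge_count' k u lam n hpos
  -- ε * c = (lam * N') * g
  have e1 : (lamK k lam n).edgeCard * c = (lam * N') * g := by
    calc (lamK k lam n).edgeCard * c = ((lamK k lam n).edgeCard / g * g) * c := by rw [hm]
      _ = ((lamK k lam n).edgeCard / g * c) * g := by ring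
      _ = (lam * N') * g := by rw [← hcount1, hcount2]
  have hprodsplit : ∏ i, n i = (n ⟨0, hk0⟩) ^ u * N' := by
    rw [← Finset.prod_filter_mul_prod_filter_not Finset.univ (fun i : Fin k => (i : ℕ) < u)]
    congr 1
    · rw [Finset.prod_congr rfl (fun i hi => heq i (Finset.mem_filter.mp hi).2),
        Finset.prod_const, card_lt_filter' k u huk]
    · rw [hN']
      apply Finset.prod_congr _ (fun _ _ => rfl)
      ext i; simp [not_lt]
  have hN'pos : 0 < N' := by
    rw [hN']; exact Finset.prod_pos (fun i _ => hpos i)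
  have hcancel : (n ⟨0, hk0⟩) ^ u * c = g := by
    apply Nat.eq_of_mul_eq_mul_left (Nat.mul_pos hlam hN'pos)
    calc (lam * N') * ((n ⟨0, hk0⟩) ^ u * c)
        = (lam * ((n ⟨0, hk0⟩) ^ u * N')) * c := by ring
      _ = (lamK k lam n).edgeCard * c := by rw [hεval, hprodsplit]
      _ = (lam * N') * g := e1
  have hprodN : ∏ i, n i = n ⟨0, hk0⟩ * N := by
    rw [hN, ← Finset.prod_filter_mul_prod_filter_not Finset.univ (fun i : Fin k => (i : ℕ) = 0)]
    congr 1
    have hsing : (Finset.univ : Finset (Fin k)).filter (fun i : Fin k => (i : ℕ) = 0)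
        = {(⟨0, hk0⟩ : Fin k)} := by
      ext i
      simp only [Finset.mem_filter, Finset.mem_univ, true_and, Finset.mem_singleton]
      constructor
      · intro h; exact Fin.ext h
      · intro h; rw [h]
    rw [hsing, Finset.prod_singleton]
  have hgval : g = n ⟨0, hk0⟩ * Nat.gcd r2 (lam * N) := by
    rw [hgdef]
    have hεfact : (lamK k lam n).edgeCard = n ⟨0, hk0⟩ * (lam * N) := by
      rw [hεval, hprodN]; ring
    rw [hεfact, mul_comm r (n ⟨0, hk0⟩), Nat.gcd_mul_left]
    congr 1
    exact gcd_shift' r r1 r2 (lam * N) hrdec hr2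
  have hdvd : n ⟨0, hk0⟩ * (n ⟨0, hk0⟩) ^ (u - 1) ∣ n ⟨0, hk0⟩ * Nat.gcd r2 (lam * N) := by
    rw [← hgval]
    refine ⟨c, ?_⟩
    rw [← hcancel]
    have hpow : n ⟨0, hk0⟩ ^ u = n ⟨0, hk0⟩ * n ⟨0, hk0⟩ ^ (u - 1) := by
      conv_lhs => rw [show u = (u - 1) + 1 from by omega]
      rw [pow_succ]; ring
    rw [hpow]
  have hn0ne : n ⟨0, hk0⟩ ≠ 0 := by have := hpos ⟨0, hk0⟩; omega
  exact dvd_trans ((mul_dvd_mul_iff_left hn0ne).mp hdvd) (Nat.gcd_dvd_left _ _)
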